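/- Let (C, Cof, W, Fib) be a bicomplete orthogonal model category, and T = (T, η, μ) a monad on C whose underlying functor preserves all small colimits, trivial cofibrations (T(Cof ∩ W) ⊆ Cof ∩ W) and bifibrant morphisms (T(Fib ∩ Cof) ⊆ Fib ∩ Cof). Then: (i) the preimages Cof^T = (V^T)^{-1}(Cof), W^T = (V^T)^{-1}(W), Fib^T = (V^T)^{-1}(Fib) under the forgetful functor form an orthogonal model structure on the Eilenberg–Moore category C^T; (ii) V^T preserves and reflects Cof-local objects: a T-algebra (A, h) is Cof^T-local if and only if A is Cof-local. In particular, F^T ⊣ V^T is a Quillen adjunction. -/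

import Mathlib

open CategoryTheory CategoryTheory.Limits

universe v u v₂ u₂

namespace DFS

variable {C : Type u} [Category.{v} C]

/-- `f` is (left) orthogonal to `g`: every commutative square from `f` to `g`
admits a unique diagonal filler. -/
def Orth {A B X Y : C} (f : A ⟶ B) (g : X ⟶ Y) : Prop :=
  ∀ (u : A ⟶ X) (v : B ⟶ Y), u ≫ g = f ≫ v → ∃! h : B ⟶ X, f ≫ h = u ∧ h ≫ g = v

/-- Mutual orthogonality of two classes of morphisms. -/
def ClassOrth (L R : MorphismProperty C) : Prop :=
  ∀ ⦃A B X Y : C⦄ (f : A ⟶ B) (g : X ⟶ Y), L f → R g → Orth f g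

/-- The class `R·L` of composites `e ≫ m` with `e ∈ L` and `m ∈ R`. -/
def Comp (R L : MorphismProperty C) : MorphismProperty C :=
  fun X Y f => ∃ (Z : C) (e : X ⟶ Z) (m : Z ⟶ Y), L e ∧ R m ∧ e ≫ m = f

/-- An object `X` is `L`-local if precomposition with every member of `L` is a
bijection of hom-sets into `X`. -/
def IsLocal (L : MorphismProperty C) (X : C) : Prop :=
  ∀ ⦃A B : C⦄ (m : A ⟶ B), L m → Function.Bijective (fun g : B ⟶ X => m ≫ g)

/-- An object `X` is `L`-separating if precomposition with every member of `L` is an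
injection of hom-sets into `X`. -/
def IsSeparating (L : MorphismProperty C) (X : C) : Prop :=
  ∀ ⦃A B : C⦄ (m : A ⟶ B), L m → Function.Injective (fun g : B ⟶ X => m ≫ g)

/-- A double (orthogonal) factorization system. -/
structure IsDFS (E J M : MorphismProperty C) : Prop where
  postcomp_iso_E : ∀ ⦃A B B' : C⦄ (e : A ⟶ B) (i : B ⟶ B'), IsIso i → E e → E (e ≫ i)
  comp_iso_J : ∀ ⦃A' A B B' : C⦄ (i : A' ⟶ A) (j : A ⟶ B) (i' : B ⟶ B'),
      IsIso i → IsIso i' → J j → J (i ≫ j ≫ i')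
  precomp_iso_M : ∀ ⦃A' A B : C⦄ (i : A' ⟶ A) (m : A ⟶ B), IsIso i → M m → M (i ≫ m)
  fac : ∀ ⦃X Y : C⦄ (f : X ⟶ Y), ∃ (A B : C) (e : X ⟶ A) (j : A ⟶ B) (m : B ⟶ Y),
      E e ∧ J j ∧ M m ∧ e ≫ j ≫ m = f
  lift : ∀ ⦃A B B'' D D' F' : C⦄ (e : A ⟶ B) (j : B ⟶ B'') (j' : D ⟶ D') (m : D' ⟶ F')
      (u : A ⟶ D) (v : B'' ⟶ F'), E e → J j → J j' → M m →
      e ≫ j ≫ v = u ≫ j' ≫ m →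
      ∃! st : (B ⟶ D) × (B'' ⟶ D'),
        e ≫ st.1 = u ∧ st.1 ≫ j' = j ≫ st.2 ∧ st.2 ≫ m = v

/-- An (orthogonal) factorization system. -/
structure IsFS (L R : MorphismProperty C) : Prop where
  fac : ∀ ⦃X Y : C⦄ (f : X ⟶ Y), ∃ (Z : C) (e : X ⟶ Z) (m : Z ⟶ Y), L e ∧ R m ∧ e ≫ m = f
  left_iff : ∀ ⦃A B : C⦄ (f : A ⟶ B), L f ↔ ∀ ⦃X Y : C⦄ (g : X ⟶ Y), R g → Orth f g
  right_iff : ∀ ⦃X Y : C⦄ (g : X ⟶ Y), R g ↔ ∀ ⦃A B : C⦄ (f : A ⟶ B), L f → Orth f g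

/-- Stability of a class of morphisms under pullback. -/
def StableUnderPB (P : MorphismProperty C) : Prop :=
  ∀ ⦃A B A' B' : C⦄ (f : A ⟶ B) (g : B' ⟶ B) (f' : A' ⟶ B') (h : A' ⟶ A),
    IsPullback h f' f g → P f → P f'

/-- A left Quillen functor between categories equipped with dfs's: it maps
trivial cofibrations to trivial cofibrations and cofibrations to cofibrations. -/
def LeftQuillen {D : Type u₂} [Category.{v₂} D]
    (EC JC : MorphismProperty C) (ED JD : MorphismProperty D) (F : C ⥤ D) : Prop :=
  (∀ ⦃A B : C⦄ (f : A ⟶ B), EC f → ED (F.map f)) ∧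
  (∀ ⦃A B : C⦄ (f : A ⟶ B), Comp JC EC f → Comp JD ED (F.map f))

end DFS

namespace DFS

variable {C : Type u} [Category.{v} C]

/-- Intersection of two classes of morphisms. -/
def Inter (P Q : MorphismProperty C) : MorphismProperty C := fun _ _ f => P f ∧ Q f

/-- The 2-out-of-3 property for a class of morphisms. -/
def TwoOutOfThree (W : MorphismProperty C) : Prop :=
  (∀ ⦃X Y Z : C⦄ (f : X ⟶ Y) (g : Y ⟶ Z), W f → W g → W (f ≫ g)) ∧
  (∀ ⦃X Y Z : C⦄ (f : X ⟶ Y) (g : Y ⟶ Z), W f → W (f ≫ g) → W g) ∧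
  (∀ ⦃X Y Z : C⦄ (f : X ⟶ Y) (g : Y ⟶ Z), W g → W (f ≫ g) → W f)

/-- An orthogonal model structure: `W` satisfies 2-out-of-3 and both
`(Cof ∩ W, Fib)` and `(Cof, W ∩ Fib)` are orthogonal factorization systems. -/
structure IsOrthModel (Cof W Fib : MorphismProperty C) : Prop where
  two_of_three : TwoOutOfThree W
  fs₁ : IsFS (Inter Cof W) Fib
  fs₂ : IsFS Cof (Inter W Fib)

/-- The preimage of a class of morphisms under the forgetful functor from
Eilenberg–Moore algebras. -/
def algPre (T : Monad C) (P : MorphismProperty C) : MorphismProperty T.Algebra :=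
  fun _ _ f => P f.f

end DFS

namespace DFS

section Aux

variable {C : Type u} [Category.{v} C]

lemma orth_comp {A B B' X Y : C} {f : A ⟶ B} {g : B ⟶ B'} {r : X ⟶ Y}
    (hf : Orth f r) (hg : Orth g r) : Orth (f ≫ g) r := by
  intro u v huv
  obtain ⟨d1, ⟨hd1a, hd1b⟩, hd1u⟩ := hf u (g ≫ v) (by rw [huv, Category.assoc])
  obtain ⟨d2, ⟨hd2a, hd2b⟩, hd2u⟩ := hg d1 v hd1b
  refine ⟨d2, ⟨by rw [Category.assoc, hd2a, hd1a], hd2b⟩, ?_⟩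
  rintro d ⟨hda, hdb⟩
  have h1 : g ≫ d = d1 := hd1u (g ≫ d)
    ⟨by rw [← Category.assoc]; exact hda, by rw [Category.assoc, hdb]⟩
  exact hd2u d ⟨h1, hdb⟩

lemma orth_comp_iso_right {A B B' X Y : C} {e : A ⟶ B} (i : B ⟶ B') [IsIso i] {g : X ⟶ Y}
    (h : Orth e g) : Orth (e ≫ i) g := by
  intro u v huv
  obtain ⟨d, ⟨hda, hdb⟩, hdu⟩ := h u (i ≫ v) (by rw [huv, Category.assoc])
  refine ⟨inv i ≫ d, ⟨?_, ?_⟩, ?_⟩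
  · rw [Category.assoc, IsIso.hom_inv_id_assoc, hda]
  · rw [Category.assoc, hdb, IsIso.inv_hom_id_assoc]
  · rintro d' ⟨hd'a, hd'b⟩
    have : i ≫ d' = d := hdu (i ≫ d')
      ⟨by rw [← Category.assoc]; exact hd'a, by rw [Category.assoc, hd'b]⟩
    rw [← this, IsIso.inv_hom_id_assoc]

lemma orth_iso_comp_left {A B X X' Y : C} {f : A ⟶ B} (i : X' ⟶ X) [IsIso i] {m : X ⟶ Y}
    (h : Orth f m) : Orth f (i ≫ m) := by
  intro u v huv
  obtain ⟨d, ⟨hda, hdb⟩, hdu⟩ := h (u ≫ i) v (by rw [Category.assoc]; exact huv)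
  refine ⟨d ≫ inv i, ⟨?_, ?_⟩, ?_⟩
  · rw [← Category.assoc, hda, Category.assoc, IsIso.hom_inv_id, Category.comp_id]
  · rw [Category.assoc, IsIso.inv_hom_id_assoc, hdb]
  · rintro d' ⟨hd'a, hd'b⟩
    have : d' ≫ i = d := hdu (d' ≫ i)
      ⟨by rw [← Category.assoc, hd'a], by rw [Category.assoc]; exact hd'b⟩
    rw [← this, Category.assoc, IsIso.hom_inv_id, Category.comp_id]

lemma IsFS.orth {L R : MorphismProperty C} (hFS : IsFS L R)
    {A B X Y : C} {f : A ⟶ B} {g : X ⟶ Y} (hf : L f) (hg : R g) : Orth f g :=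
  (hFS.left_iff f).mp hf g hg

/-- Right cancellation for the left class of an orthogonal factorization system. -/
lemma IsFS.cancel_left {L R : MorphismProperty C} (hFS : IsFS L R)
    {A B B' : C} (f : A ⟶ B) (g : B ⟶ B') (hf : L f) (hfg : L (f ≫ g)) : L g := by
  rw [hFS.left_iff]
  intro X Y r hr u v huv
  obtain ⟨d, ⟨hda, hdb⟩, hdu⟩ := hFS.orth hfg hr (f ≫ u) v
    (by rw [Category.assoc, huv, Category.assoc])
  have hgd : g ≫ d = u := by
    obtain ⟨k, -, hku⟩ := hFS.orth hf hr (f ≫ u) (u ≫ r)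
      (by rw [Category.assoc])
    have h1 : g ≫ d = k := hku (g ≫ d)
      ⟨by rw [← Category.assoc]; exact hda, by rw [Category.assoc, hdb, huv]⟩
    have h2 : u = k := hku u ⟨rfl, rfl⟩
    exact h1.trans h2.symm
  refine ⟨d, ⟨hgd, hdb⟩, ?_⟩
  rintro d' ⟨hd'a, hd'b⟩
  exact hdu d' ⟨by rw [Category.assoc, hd'a], hd'b⟩

lemma IsFS.left_comp {L R : MorphismProperty C} (hFS : IsFS L R)
    {A B B' : C} {f : A ⟶ B} {g : B ⟶ B'} (hf : L f) (hg : L g) : L (f ≫ g) := by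
  rw [hFS.left_iff]
  intro X Y r hr
  exact orth_comp (hFS.orth hf hr) (hFS.orth hg hr)

variable (T : Monad C)

/-- Orthogonality lifts from `C` to `T`-algebras. -/
lemma alg_orth {L R : MorphismProperty C} (hFS : IsFS L R)
    (hT : ∀ ⦃A B : C⦄ (f : A ⟶ B), L f → L (T.toFunctor.map f))
    {A B X Y : T.Algebra} {f : A ⟶ B} {g : X ⟶ Y} (hf : L f.f) (hg : R g.f) :
    Orth f g := by
  intro u v huv
  have huv' : u.f ≫ g.f = f.f ≫ v.f := congrArg Monad.Algebra.Hom.f huv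
  obtain ⟨d, ⟨hda, hdb⟩, hdu⟩ := hFS.orth hf hg u.f v.f huv'
  -- show `d` is a morphism of algebras
  have halg : (T : C ⥤ C).map d ≫ X.a = B.a ≫ d := by
    obtain ⟨k, -, hku⟩ := hFS.orth (hT f.f hf) hg (A.a ≫ u.f)
      ((T : C ⥤ C).map v.f ≫ Y.a) (by simp [huv'])
    have h1 : B.a ≫ d = k := hku (B.a ≫ d)
      ⟨by simp [hda], by simp [hdb]⟩
    have h2 : (T : C ⥤ C).map d ≫ X.a = k := hku ((T : C ⥤ C).map d ≫ X.a)
      ⟨by rw [← Functor.map_comp_assoc, hda, u.h],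
       by rw [Category.assoc, ← g.h, ← Functor.map_comp_assoc, hdb]⟩
    exact h2.trans h1.symm
  refine ⟨⟨d, halg⟩, ⟨?_, ?_⟩, ?_⟩
  · apply Monad.Algebra.Hom.ext' ; exact hda
  · apply Monad.Algebra.Hom.ext' ; exact hdb
  · rintro d' ⟨hd'a, hd'b⟩
    apply Monad.Algebra.Hom.ext'
    exact hdu d'.f ⟨congrArg Monad.Algebra.Hom.f hd'a, congrArg Monad.Algebra.Hom.f hd'b⟩

/-- Factorizations lift from `C` to `T`-algebras. -/
lemma alg_fac {L R : MorphismProperty C} (hFS : IsFS L R)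
    (hT : ∀ ⦃A B : C⦄ (f : A ⟶ B), L f → L (T.toFunctor.map f))
    {A B : T.Algebra} (f : A ⟶ B) :
    ∃ (Z : T.Algebra) (e : A ⟶ Z) (m : Z ⟶ B), L e.f ∧ R m.f ∧ e ≫ m = f := by
  obtain ⟨Z, e, m, he, hm, hem⟩ := hFS.fac f.f
  -- construct the algebra structure on Z
  obtain ⟨z, ⟨hza, hzb⟩, hzu⟩ := hFS.orth (hT e he) hm (A.a ≫ e) ((T : C ⥤ C).map m ≫ B.a)
    (by
      have hh := f.h
      rw [Category.assoc, hem, ← hh, ← Functor.map_comp_assoc, hem])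
  have hunit : T.η.app Z ≫ z = 𝟙 Z := by
    obtain ⟨k, -, hku⟩ := hFS.orth he hm e m rfl
    have h1 : T.η.app Z ≫ z = k := hku (T.η.app Z ≫ z)
      ⟨by
        have hn := T.η.naturality_assoc e z
        simp only [Functor.id_map] at hn
        rw [hn, hza, A.unit_assoc],
       by
        have hn := T.η.naturality_assoc m B.a
        simp only [Functor.id_map] at hn
        rw [Category.assoc, hzb, ← hn, B.unit]
        simp⟩
    have h2 : 𝟙 Z = k := hku (𝟙 Z) ⟨Category.comp_id e, Category.id_comp m⟩
    exact h1.trans h2.symm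
  have hassoc : T.μ.app Z ≫ z = (T : C ⥤ C).map z ≫ z := by
    obtain ⟨k, -, hku⟩ := hFS.orth (hT _ (hT e he)) hm
      (T.μ.app A.A ≫ A.a ≫ e)
      ((T : C ⥤ C).map ((T : C ⥤ C).map m) ≫ T.μ.app B.A ≫ B.a)
      (by
        have hn := T.μ.naturality_assoc f.f B.a
        simp only [Functor.comp_map] at hn
        have hh := f.h
        calc (T.μ.app A.A ≫ A.a ≫ e) ≫ m
            = T.μ.app A.A ≫ A.a ≫ f.f := by
              rw [Category.assoc, Category.assoc, hem]
          _ = T.μ.app A.A ≫ (T : C ⥤ C).map f.f ≫ B.a := by rw [← hh]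
          _ = (T : C ⥤ C).map ((T : C ⥤ C).map f.f) ≫ T.μ.app B.A ≫ B.a := hn.symm
          _ = (T : C ⥤ C).map ((T : C ⥤ C).map e) ≫
                (T : C ⥤ C).map ((T : C ⥤ C).map m) ≫ T.μ.app B.A ≫ B.a := by
              rw [← Functor.map_comp_assoc, ← Functor.map_comp, hem])
    have h1 : T.μ.app Z ≫ z = k := hku (T.μ.app Z ≫ z)
      ⟨by
        have hn := T.μ.naturality_assoc e z
        simp only [Functor.comp_map] at hn
        rw [hn, hza],
       by
        have hn := T.μ.naturality_assoc m B.a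
        simp only [Functor.comp_map] at hn
        rw [Category.assoc, hzb, ← hn]⟩
    have h2 : (T : C ⥤ C).map z ≫ z = k := hku ((T : C ⥤ C).map z ≫ z)
      ⟨by rw [← Functor.map_comp_assoc, hza, Functor.map_comp, Category.assoc, hza,
          ← A.assoc_assoc],
       by rw [Category.assoc, hzb, ← Functor.map_comp_assoc, hzb, Functor.map_comp,
          Category.assoc, ← B.assoc]⟩
    exact h1.trans h2.symm
  refine ⟨⟨Z, z, hunit, hassoc⟩, ⟨e, hza⟩, ⟨m, hzb.symm⟩, he, hm, ?_⟩
  apply Monad.Algebra.Hom.ext'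
  exact hem

/-- An orthogonal factorization system lifts from `C` to `T`-algebras,
provided `T` preserves the left class. -/
lemma alg_isfs {L R : MorphismProperty C} (hFS : IsFS L R)
    (hT : ∀ ⦃A B : C⦄ (f : A ⟶ B), L f → L (T.toFunctor.map f)) :
    IsFS (algPre T L) (algPre T R) := by
  constructor
  · intro A B f
    obtain ⟨Z, e, m, he, hm, hem⟩ := alg_fac T hFS hT f
    exact ⟨Z, e, m, he, hm, hem⟩
  · intro A B f
    constructor
    · intro hf X Y g hg
      exact alg_orth T hFS hT hf hg
    · intro hOrth
      obtain ⟨Z, e, m, he, hm, hem⟩ := alg_fac T hFS hT f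
      -- since f ⊥ m, we get a section h of m, and then m is an isomorphism
      obtain ⟨k, ⟨hka, hkb⟩, -⟩ := hOrth m hm e (𝟙 B)
        (by rw [hem, Category.comp_id])
      have hmk : m ≫ k = 𝟙 Z := by
        obtain ⟨l, -, hlu⟩ := alg_orth T hFS hT he hm e m rfl
        have h1 : m ≫ k = l := hlu (m ≫ k)
          ⟨by rw [← Category.assoc, hem, hka],
           by rw [Category.assoc, hkb, Category.comp_id]⟩
        have h2 : 𝟙 Z = l := hlu (𝟙 Z) ⟨Category.comp_id e, Category.id_comp m⟩
        exact h1.trans h2.symm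
      have : IsIso m := ⟨⟨k, hmk, hkb⟩⟩
      have hmiso : IsIso m.f := by
        exact (inferInstance : IsIso ((T.forget).map m))
      have hff : f.f = e.f ≫ m.f := (congrArg Monad.Algebra.Hom.f hem).symm
      show L f.f
      rw [hff, hFS.left_iff]
      intro X Y g hg
      exact orth_comp_iso_right m.f ((hFS.left_iff e.f).mp he g hg)
  · intro X Y g
    constructor
    · intro hg A B f hf
      exact alg_orth T hFS hT hf hg
    · intro hOrth
      obtain ⟨Z, e, m, he, hm, hem⟩ := alg_fac T hFS hT g
      obtain ⟨k, ⟨hka, hkb⟩, -⟩ := hOrth e he (𝟙 X) m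
        (by rw [hem, Category.id_comp])
      have hke : k ≫ e = 𝟙 Z := by
        obtain ⟨l, -, hlu⟩ := alg_orth T hFS hT he hm e m rfl
        have h1 : k ≫ e = l := hlu (k ≫ e)
          ⟨by rw [← Category.assoc, hka, Category.id_comp],
           by rw [Category.assoc, hem, hkb]⟩
        have h2 : 𝟙 Z = l := hlu (𝟙 Z) ⟨Category.comp_id e, Category.id_comp m⟩
        exact h1.trans h2.symm
      have : IsIso e := ⟨⟨k, hka, hke⟩⟩
      have heiso : IsIso e.f := by
        exact (inferInstance : IsIso ((T.forget).map e))
      have hg' : g.f = e.f ≫ m.f := (congrArg Monad.Algebra.Hom.f hem).symm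
      show R g.f
      rw [hg', hFS.right_iff]
      intro A B f hf
      exact orth_iso_comp_left e.f ((hFS.right_iff m.f).mp hm f hf)

end Aux

section Model

variable {C : Type u} [Category.{v} C]

/-- In an orthogonal model category, every cofibration factors as a trivial
cofibration followed by a bifibrant morphism. -/
lemma cof_fac {Cof W Fib : MorphismProperty C} (h : IsOrthModel Cof W Fib)
    {A B : C} (f : A ⟶ B) (hf : Cof f) :
    ∃ (Z : C) (e : A ⟶ Z) (m : Z ⟶ B),
      (Cof e ∧ W e) ∧ (Fib m ∧ Cof m) ∧ e ≫ m = f := by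
  obtain ⟨Z, e, m, he, hm, hem⟩ := h.fs₁.fac f
  have hmc : Cof m := h.fs₂.cancel_left e m he.1 (by rw [hem]; exact hf)
  exact ⟨Z, e, m, he, ⟨hm, hmc⟩, hem⟩

/-- `T` preserves cofibrations. -/
lemma monad_pres_cof {Cof W Fib : MorphismProperty C} (h : IsOrthModel Cof W Fib)
    (T : Monad C)
    (hE : ∀ ⦃A B : C⦄ (f : A ⟶ B), Cof f ∧ W f →
      Cof (T.toFunctor.map f) ∧ W (T.toFunctor.map f))
    (hJ : ∀ ⦃A B : C⦄ (f : A ⟶ B), Fib f ∧ Cof f →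
      Fib (T.toFunctor.map f) ∧ Cof (T.toFunctor.map f))
    {A B : C} (f : A ⟶ B) (hf : Cof f) : Cof (T.toFunctor.map f) := by
  obtain ⟨Z, e, m, he, hm, hem⟩ := cof_fac h f hf
  have : T.toFunctor.map e ≫ T.toFunctor.map m = T.toFunctor.map f := by
    rw [← Functor.map_comp, hem]
  rw [← this]
  exact h.fs₂.left_comp (hE e he).1 (hJ m hm).2

end Model

end DFS

/-- Let `(C, Cof, W, Fib)` be a bicomplete orthogonal model category and
`T` a monad preserving all small colimits, trivial cofibrations and bifibrant morphisms.
Then (i) the preimages of `Cof`, `W`, `Fib` under the forgetful functor form an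
orthogonal model structure on `C^T`; (ii) a `T`-algebra is `Cof^T`-local iff its
underlying object is `Cof`-local; in particular `F^T ⊣ V^T` is a Quillen adjunction
(the free functor preserves cofibrations and trivial cofibrations). -/
theorem statement6 {C : Type u} [Category.{v} C] [HasLimits C] [HasColimits C]
    (Cof W Fib : MorphismProperty C) (h : DFS.IsOrthModel Cof W Fib) (T : Monad C)
    [PreservesColimits T.toFunctor]
    (hE : ∀ ⦃A B : C⦄ (f : A ⟶ B), Cof f ∧ W f →
      Cof (T.toFunctor.map f) ∧ W (T.toFunctor.map f))
    (hJ : ∀ ⦃A B : C⦄ (f : A ⟶ B), Fib f ∧ Cof f →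
      Fib (T.toFunctor.map f) ∧ Cof (T.toFunctor.map f)) :
    DFS.IsOrthModel (DFS.algPre T Cof) (DFS.algPre T W) (DFS.algPre T Fib) ∧
    (∀ X : T.Algebra,
      DFS.IsLocal (DFS.algPre T Cof) X ↔ DFS.IsLocal Cof X.A) ∧
    (∀ ⦃A B : C⦄ (f : A ⟶ B), Cof f → DFS.algPre T Cof (T.free.map f)) ∧
    (∀ ⦃A B : C⦄ (f : A ⟶ B), Cof f ∧ W f →
      DFS.algPre T Cof (T.free.map f) ∧ DFS.algPre T W (T.free.map f)) := by
  have hCof : ∀ ⦃A B : C⦄ (f : A ⟶ B), Cof f → Cof (T.toFunctor.map f) :=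
    fun A B f hf => DFS.monad_pres_cof h T hE hJ f hf
  have hInter : ∀ ⦃A B : C⦄ (f : A ⟶ B), DFS.Inter Cof W f →
      DFS.Inter Cof W (T.toFunctor.map f) := fun A B f hf => hE f hf
  refine ⟨⟨?_, ?_, ?_⟩, ?_, ?_, ?_⟩
  · -- two out of three
    obtain ⟨h1, h2, h3⟩ := h.two_of_three
    exact ⟨fun X Y Z f g hf hg => h1 f.f g.f hf hg,
      fun X Y Z f g hf hfg => h2 f.f g.f hf hfg,
      fun X Y Z f g hg hfg => h3 f.f g.f hg hfg⟩
  · exact DFS.alg_isfs T h.fs₁ hInter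
  · exact DFS.alg_isfs T h.fs₂ hCof
  · -- locality
    intro X
    constructor
    · intro hloc A B m hm
      have hb : Function.Bijective
          (fun g : T.free.obj B ⟶ X => T.free.map m ≫ g) :=
        hloc (T.free.map m) (show Cof (T.toFunctor.map m) from hCof m hm)
      have key : (fun u : B ⟶ X.A => m ≫ u) =
          fun u => (T.adj.homEquiv A X)
            (T.free.map m ≫ ((T.adj.homEquiv B X).symm u)) := by
        funext u
        rw [Adjunction.homEquiv_naturality_left]
        exact congrArg (m ≫ ·) ((T.adj.homEquiv B X).apply_symm_apply u).symm
      rw [key]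
      exact ((T.adj.homEquiv A X).bijective.comp hb).comp
        (T.adj.homEquiv B X).symm.bijective
    · intro hloc A B m hm
      constructor
      · intro g₁ g₂ hg
        apply Monad.Algebra.Hom.ext'
        exact (hloc m.f hm).injective (congrArg Monad.Algebra.Hom.f hg)
      · intro u
        obtain ⟨g, hg⟩ := (hloc m.f hm).surjective u.f
        have hg : m.f ≫ g = u.f := hg
        have halg : (T : C ⥤ C).map g ≫ X.a = B.a ≫ g := by
          apply (hloc (T.toFunctor.map m.f) (hCof m.f hm)).injective
          show T.toFunctor.map m.f ≫ _ = T.toFunctor.map m.f ≫ _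
          rw [← Functor.map_comp_assoc, hg, u.h, ← Category.assoc, m.h,
            Category.assoc, hg]
        refine ⟨⟨g, halg⟩, ?_⟩
        apply Monad.Algebra.Hom.ext'
        exact hg
  · intro A B f hf
    exact hCof f hf
  · intro A B f hf
    exact hE f hf
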